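/- (Theorem 2) The forward- and backward-dependent factorized (low-rank) CDM ranking models are equivalent under the bijection g: for every parameter θ = (δ, β, T, C), every covariate function x : 𝒰 → ℝ^d, every choice set S ⊆ 𝒰 with |S| ≥ 2, and every j ∈ S, the forward-dependent choice probability under θ equals the backward-dependent choice probability under g(θ), i.e. exp(V^F_θ(j|S)) / Σ_{k ∈ S} exp(V^F_θ(k|S)) = exp(V^B_{g(θ)}(j|S)) / Σ_{k ∈ S} exp(V^B_{g(θ)}(k|S)). -/
import Mathlib


open Finset

/-- Forward-dependent representative utility of the factorized (low-rank) CDM: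
`V^F_θ(j|S) = δ_j + β·x_j + t_jᵀ (Σ_{l ∈ S, l ≠ j} c_l)`. -/
noncomputable def VFlow {𝒰 : Type*} [DecidableEq 𝒰] {d r : ℕ}
    (δ : 𝒰 → ℝ) (β : Fin d → ℝ) (t c : 𝒰 → Fin r → ℝ)
    (x : 𝒰 → Fin d → ℝ) (S : Finset 𝒰) (j : 𝒰) : ℝ :=
  δ j + (∑ i, β i * x j i) + ∑ k, t j k * ∑ l ∈ S.erase j, c l k

/-- Backward-dependent representative utility of the factorized (low-rank) CDM:
`V^B_θ(j|S) = δ_j + β·x_j + t_jᵀ (Σ_{l ∈ 𝒰 \ S} c_l)`. -/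
noncomputable def VBlow {𝒰 : Type*} [Fintype 𝒰] [DecidableEq 𝒰] {d r : ℕ}
    (δ : 𝒰 → ℝ) (β : Fin d → ℝ) (t c : 𝒰 → Fin r → ℝ)
    (x : 𝒰 → Fin d → ℝ) (S : Finset 𝒰) (j : 𝒰) : ℝ :=
  δ j + (∑ i, β i * x j i) + ∑ k, t j k * ∑ l ∈ Sᶜ, c l k

/-- The parameter map `g` of the factorized (low-rank) CDM, sending `(δ, β, T, C)` to
`({δ_i + t_iᵀ (Σ_{j ≠ i} c_j)}_i, β, T, −C)`. -/
noncomputable def cdmG (𝒰 : Type*) [Fintype 𝒰] [DecidableEq 𝒰] (d r : ℕ) :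
    ((𝒰 → ℝ) × (Fin d → ℝ) × (𝒰 → Fin r → ℝ) × (𝒰 → Fin r → ℝ)) →
      ((𝒰 → ℝ) × (Fin d → ℝ) × (𝒰 → Fin r → ℝ) × (𝒰 → Fin r → ℝ)) :=
  fun θ =>
    (fun i => θ.1 i + ∑ k, θ.2.2.1 i k * ∑ j ∈ Finset.univ.erase i, θ.2.2.2 j k,
      θ.2.1, θ.2.2.1, fun j k => -θ.2.2.2 j k)

/-- (Theorem 2) The forward- and backward-dependent factorized (low-rank) CDM ranking models
are equivalent under the bijection `g`: for every `θ = (δ, β, T, C)`, covariates `x`, choice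
set `S` with `|S| ≥ 2`, and `j ∈ S`, the forward-dependent choice probability under `θ`
equals the backward-dependent choice probability under `g(θ)`. -/
theorem lowrank_cdm_forward_eq_backward_prob
    (𝒰 : Type*) [Fintype 𝒰] [DecidableEq 𝒰] (d r : ℕ)
    (θ : (𝒰 → ℝ) × (Fin d → ℝ) × (𝒰 → Fin r → ℝ) × (𝒰 → Fin r → ℝ))
    (x : 𝒰 → Fin d → ℝ) (S : Finset 𝒰) (hS : 2 ≤ S.card) (j : 𝒰) (hj : j ∈ S) :
    Real.exp (VFlow θ.1 θ.2.1 θ.2.2.1 θ.2.2.2 x S j) /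
        ∑ k ∈ S, Real.exp (VFlow θ.1 θ.2.1 θ.2.2.1 θ.2.2.2 x S k)
      = Real.exp (VBlow (cdmG 𝒰 d r θ).1 (cdmG 𝒰 d r θ).2.1 (cdmG 𝒰 d r θ).2.2.1
            (cdmG 𝒰 d r θ).2.2.2 x S j) /
          ∑ k ∈ S, Real.exp (VBlow (cdmG 𝒰 d r θ).1 (cdmG 𝒰 d r θ).2.1 (cdmG 𝒰 d r θ).2.2.1
            (cdmG 𝒰 d r θ).2.2.2 x S k) := by
  have key : ∀ k ∈ S, VBlow (cdmG 𝒰 d r θ).1 (cdmG 𝒰 d r θ).2.1 (cdmG 𝒰 d r θ).2.2.1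
      (cdmG 𝒰 d r θ).2.2.2 x S k = VFlow θ.1 θ.2.1 θ.2.2.1 θ.2.2.2 x S k := by
    intro k hk
    simp only [VBlow, VFlow, cdmG]
    have hsum : ∀ m, ∑ l ∈ Finset.univ.erase k, θ.2.2.2 l m
        = ∑ l ∈ S.erase k, θ.2.2.2 l m + ∑ l ∈ Sᶜ, θ.2.2.2 l m := by
      intro m
      have h1 := Finset.sum_erase_add Finset.univ (fun l => θ.2.2.2 l m) (Finset.mem_univ k)
      have h2 := Finset.sum_erase_add S (fun l => θ.2.2.2 l m) hk
      have h3 : ∑ l, θ.2.2.2 l m = ∑ l ∈ S, θ.2.2.2 l m + ∑ l ∈ Sᶜ, θ.2.2.2 l m :=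
        (Finset.sum_add_sum_compl S _).symm
      linarith
    have h4 : ∑ m, (θ.2.2.1 k m * ∑ l ∈ Finset.univ.erase k, θ.2.2.2 l m
        + θ.2.2.1 k m * ∑ l ∈ Sᶜ, -θ.2.2.2 l m)
        = ∑ m, θ.2.2.1 k m * ∑ l ∈ S.erase k, θ.2.2.2 l m := by
      refine Finset.sum_congr rfl fun m _ => ?_
      rw [hsum m, Finset.sum_neg_distrib]
      ring
    rw [Finset.sum_add_distrib] at h4
    linarith
  rw [key j hj,
    Finset.sum_congr rfl fun k hk => congrArg Real.exp (key k hk)]
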